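/- Let f be a map from a finite domain D_f into Finset a such that f v = V v for every v ∈ D_f, and let g = R_m f. Then for every x in the domain of g, g x = R x. -/
import Mathlib


/-- A map with finite domain `dom`, whose values are given by `toFun`. -/
structure FMap (α : Type*) (β : Type*) where
  dom : Finset α
  toFun : α → β

/-- The map `next f`, with domain `⋃ v ∈ D_f, f v` and values `V`. -/
def FMap.next {α : Type*} [DecidableEq α] (V : α → Finset α)
    (f : FMap α (Finset α)) : FMap α (Finset α) :=
  ⟨f.dom.biUnion f.toFun, V⟩

/-- `α f`: the supremum of the potential `γ` over the domain of `f` (⊥ for the empty domain). -/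
def FMap.alpha {α β : Type*} (γ : α → ℕ) (f : FMap α β) : WithBot ℕ :=
  f.dom.sup (fun v => (γ v : WithBot ℕ))

/-- The map `G_m f m`, with domain `D_f ∪ D_m`. -/
def FMap.Gm {α β σ : Type*} [DecidableEq α] (P : α → Prop) [DecidablePred P] (e : β)
    (F : Finset α → (α → β) → σ) (G : α → σ → β)
    (f : FMap α (Finset α)) (m : FMap α β) : FMap α β :=
  ⟨f.dom ∪ m.dom, fun x =>
    if x ∈ m.dom then m.toFun x
    else if P x then e
    else G x (F (f.toFun x) m.toFun)⟩

/-- Auxiliary form of `R_m` for maps whose values are given by `V`; the recursion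
terminates because the potential strictly decreases along iterated domains. -/
def RmAux {α β σ : Type*} [DecidableEq α] (P : α → Prop) [DecidablePred P] (e : β)
    (F : Finset α → (α → β) → σ) (G : α → σ → β) (V : α → Finset α)
    (γ : α → ℕ) (hγ : ∀ x, ∀ y ∈ V x, γ y < γ x) (D : Finset α) : FMap α β :=
  if h : ∀ x ∈ D, P x then ⟨D, fun _ => e⟩
  else FMap.Gm P e F G ⟨D, V⟩ (RmAux P e F G V γ hγ (D.biUnion V))
termination_by D.sup (fun x => γ x + 1)
decreasing_by
  push_neg at h
  obtain ⟨x₀, hx₀, -⟩ := h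
  have hle : γ x₀ + 1 ≤ D.sup (fun x => γ x + 1) :=
    Finset.le_sup (f := fun x => γ x + 1) hx₀
  have hpos : 0 < D.sup (fun x => γ x + 1) := lt_of_lt_of_le (Nat.succ_pos _) hle
  rw [Finset.sup_lt_iff hpos]
  intro y hy
  obtain ⟨x, hx, hyx⟩ := Finset.mem_biUnion.mp hy
  have hle' : γ x + 1 ≤ D.sup (fun z => γ z + 1) :=
    Finset.le_sup (f := fun z => γ z + 1) hx
  have := hγ x y hyx
  omega

/-- `R_m f`: if `P` holds on all of `D_f`, the constant map `e` on `D_f`;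
otherwise `G_m f (R_m (next f))`.  (Note that `R_m (next V f) = RmAux … (next V f).dom`.) -/
def Rm {α β σ : Type*} [DecidableEq α] (P : α → Prop) [DecidablePred P] (e : β)
    (F : Finset α → (α → β) → σ) (G : α → σ → β) (V : α → Finset α)
    (γ : α → ℕ) (hγ : ∀ x, ∀ y ∈ V x, γ y < γ x) (f : FMap α (Finset α)) : FMap α β :=
  if ∀ x ∈ f.dom, P x then ⟨f.dom, fun _ => e⟩
  else FMap.Gm P e F G f (RmAux P e F G V γ hγ ((FMap.next V f).dom))

theorem subset_RmAux_dom {α β σ : Type*} [DecidableEq α] (P : α → Prop) [DecidablePred P] (e : β)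
    (F : Finset α → (α → β) → σ) (G : α → σ → β) (V : α → Finset α)
    (γ : α → ℕ) (hγ : ∀ x, ∀ y ∈ V x, γ y < γ x) (D : Finset α) :
    D ⊆ (RmAux P e F G V γ hγ D).dom := by
  rw [RmAux]
  split
  · exact Finset.Subset.refl _
  · exact fun x hx => Finset.mem_union_left _ hx

theorem RmAux_eq_R {α β σ : Type*} [DecidableEq α] (P : α → Prop) [DecidablePred P] (e : β)
    (V : α → Finset α) (γ : α → ℕ) (hγ : ∀ x, ∀ y ∈ V x, γ y < γ x)
    (F : Finset α → (α → β) → σ)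
    (hF : ∀ (S : Finset α) (h h' : α → β), (∀ x ∈ S, h x = h' x) → F S h = F S h')
    (G : α → σ → β) (R : α → β)
    (hR : ∀ x, R x = if P x then e else G x (F (V x) R))
    (D : Finset α) :
    ∀ x ∈ (RmAux P e F G V γ hγ D).dom, (RmAux P e F G V γ hγ D).toFun x = R x := by
  suffices H : ∀ n (D : Finset α), D.sup (fun x => γ x + 1) < n →
      ∀ x ∈ (RmAux P e F G V γ hγ D).dom, (RmAux P e F G V γ hγ D).toFun x = R x from
    H (D.sup (fun x => γ x + 1) + 1) D (Nat.lt_succ_self _)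
  intro n
  induction n with
  | zero => exact fun D h => absurd h (Nat.not_lt_zero _)
  | succ n ihn =>
    intro D hD
    rw [RmAux]
    split
    · rename_i h
      intro x hx
      simp only
      rw [hR x, if_pos (h x hx)]
    · rename_i h
      push_neg at h
      obtain ⟨x₀, hx₀, -⟩ := h
      have hsup : (D.biUnion V).sup (fun x => γ x + 1) < D.sup (fun x => γ x + 1) := by
        have hle : γ x₀ + 1 ≤ D.sup (fun x => γ x + 1) :=
          Finset.le_sup (f := fun x => γ x + 1) hx₀
        have hpos : 0 < D.sup (fun x => γ x + 1) := lt_of_lt_of_le (Nat.succ_pos _) hle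
        rw [Finset.sup_lt_iff hpos]
        intro y hy
        obtain ⟨x, hx, hyx⟩ := Finset.mem_biUnion.mp hy
        have hle' : γ x + 1 ≤ D.sup (fun z => γ z + 1) :=
          Finset.le_sup (f := fun z => γ z + 1) hx
        have := hγ x y hyx
        omega
      have IH := ihn (D.biUnion V) (by omega)
      intro x hx
      simp only [FMap.Gm] at hx ⊢
      by_cases hm : x ∈ (RmAux P e F G V γ hγ (D.biUnion V)).dom
      · rw [if_pos hm]; exact IH x hm
      · rw [if_neg hm]
        by_cases hp : P x
        · rw [if_pos hp, hR x, if_pos hp]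
        · rw [if_neg hp, hR x, if_neg hp]
          have hxD : x ∈ D := by
            rcases Finset.mem_union.mp hx with h1 | h1
            · exact h1
            · exact absurd h1 hm
          congr 1
          apply hF
          intro y hy
          have hyb : y ∈ D.biUnion V := Finset.mem_biUnion.mpr ⟨x, hxD, hy⟩
          exact IH y (subset_RmAux_dom P e F G V γ hγ _ hyb)

/-- **Theorem 1.** Let `R : α → β` be the function defined by well-founded
recursion on `γ` via `R x = if P x then e else G x (F (V x) R)` (here given together with
its defining equation `hR`).  Let `f` be a map from a finite domain `D_f` into `Finset α`
such that `f v = V v` for every `v ∈ D_f`, and let `g = R_m f`.  Then for every `x` in the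
domain of `g`, `g x = R x`. -/
theorem Rm_eq_R_on_dom {α β σ : Type*} [DecidableEq α]
    (P : α → Prop) [DecidablePred P] (e : β)
    (V : α → Finset α) (γ : α → ℕ)
    (hγ : ∀ x, ∀ y ∈ V x, γ y < γ x)
    (F : Finset α → (α → β) → σ)
    (hF : ∀ (S : Finset α) (h h' : α → β), (∀ x ∈ S, h x = h' x) → F S h = F S h')
    (G : α → σ → β)
    (R : α → β)
    (hR : ∀ x, R x = if P x then e else G x (F (V x) R))
    (f : FMap α (Finset α))
    (hf : ∀ v ∈ f.dom, f.toFun v = V v) :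
    ∀ x ∈ (Rm P e F G V γ hγ f).dom,
      (Rm P e F G V γ hγ f).toFun x = R x := by
  intro x hx
  rw [Rm] at hx ⊢
  split at hx
  · rename_i h
    rw [if_pos h] at *
    simp only at hx ⊢
    rw [hR x, if_pos (h x hx)]
  · rename_i h
    rw [if_neg h] at *
    set m := RmAux P e F G V γ hγ ((FMap.next V f).dom) with hm
    have IH := RmAux_eq_R P e V γ hγ F hF G R hR ((FMap.next V f).dom)
    simp only [FMap.Gm] at hx ⊢
    by_cases hxm : x ∈ m.dom
    · rw [if_pos hxm]; exact IH x hxm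
    · rw [if_neg hxm]
      have hxD : x ∈ f.dom := by
        rcases Finset.mem_union.mp hx with h1 | h1
        · exact h1
        · exact absurd h1 hxm
      by_cases hp : P x
      · rw [if_pos hp, hR x, if_pos hp]
      · rw [if_neg hp, hR x, if_neg hp]
        rw [hf x hxD]
        congr 1
        apply hF
        intro y hy
        have hyb : y ∈ (FMap.next V f).dom := by
          simp only [FMap.next]
          exact Finset.mem_biUnion.mpr ⟨x, hxD, by rw [hf x hxD]; exact hy⟩
        exact IH y (subset_RmAux_dom P e F G V γ hγ _ hyb)
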